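/- Let J₁ = [x₁, y₁] and J₂ be compact intervals in ℝ and let g ∈ SL(2,ℝ) be such that the Möbius transformation of g maps J₁ onto J₂ preserving orientation. Then g = R · T_{J₂} · g_α · T_{J₁}^{−1} for some R ∈ {I, −I}, where α = log((g^{−1}(∞) − y₁)/(g^{−1}(∞) − x₁)) if g^{−1}(∞) ≠ ∞ and α = 0 otherwise. -/

import Mathlib

open Real

/-- The Möbius action of a 2×2 real matrix on ℝ. -/
noncomputable def moeb (g : Matrix (Fin 2) (Fin 2) ℝ) (z : ℝ) : ℝ :=
  (g 0 0 * z + g 0 1) / (g 1 0 * z + g 1 1)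

/-- T_J for the interval J = [x, y]: the affine map sending [0,1] onto J. -/
noncomputable def TJ (x y : ℝ) : Matrix (Fin 2) (Fin 2) ℝ :=
  !![Real.sqrt (y - x), x / Real.sqrt (y - x); 0, 1 / Real.sqrt (y - x)]

/-- g_α, the orientation-preserving Möbius maps fixing [0,1]. -/
noncomputable def gAlpha (α : ℝ) : Matrix (Fin 2) (Fin 2) ℝ :=
  !![Real.exp (α / 2), 0; Real.exp (α / 2) - Real.exp (-α / 2), Real.exp (-α / 2)]

lemma pole_aux (a c B T : ℝ) (hc : c ≠ 0) (hT : 0 < T) (hB : 0 ≤ B)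
    (f : ℝ → ℝ) (hbd : ∀ t, 0 < t → t ≤ T → |f t| ≤ B)
    (heq : ∀ t, 0 < t → t ≤ T → c * t * f t = a * t - 1 / c) : False := by
  set K := |a| + |c| * B + 1 with hK
  have hcpos : 0 < |c| := abs_pos.mpr hc
  have hKpos : 0 < K := by positivity
  set t := min T (1 / (2 * |c| * K)) with ht
  have ht0 : 0 < t := lt_min hT (by positivity)
  have htT : t ≤ T := min_le_left _ _
  have htK : t ≤ 1 / (2 * |c| * K) := min_le_right _ _
  rw [le_div_iff₀ (by positivity)] at htK
  have h1 := heq t ht0 htT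
  have h2 : (1 : ℝ) = c * t * (a - c * f t) := by
    field_simp at h1
    linear_combination h1
  have h3 : (1 : ℝ) ≤ |c| * t * (|a| + |c| * B) := by
    calc (1:ℝ) = |c * t * (a - c * f t)| := by rw [← h2]; simp
    _ = |c| * t * |a - c * f t| := by
        rw [abs_mul, abs_mul, abs_of_pos ht0]
    _ ≤ |c| * t * (|a| + |c| * B) := by
        have hsub : |a - c * f t| ≤ |a| + |c| * B := by
          calc |a - c * f t| ≤ |a| + |c * f t| := abs_sub _ _
          _ = |a| + |c| * |f t| := by rw [abs_mul]
          _ ≤ |a| + |c| * B := by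
              have := hbd t ht0 htT
              nlinarith
        nlinarith [mul_pos hcpos ht0]
  nlinarith [h3, htK, mul_pos hcpos ht0, hB, hcpos.le]


lemma entry_lemma (a b c d x₁ y₁ x₂ y₂ s₁ s₂ E F ε : ℝ)
    (hs₁ : s₁ ≠ 0) (hs₂ : s₂ ≠ 0)
    (hx' : a * x₁ + b = x₂ * (c * x₁ + d)) (hy' : a * y₁ + b = y₂ * (c * y₁ + d))
    (hEs : E * s₁ = ε * (c * y₁ + d) * s₂) (hFs : F * s₁ = ε * (c * x₁ + d) * s₂)
    (hs₁sq : s₁ ^ 2 = y₁ - x₁) (hs₂sq : s₂ ^ 2 = y₂ - x₂) (hε2 : ε ^ 2 = 1) :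
    !![s₂, x₂ / s₂; 0, 1 / s₂] * !![E, 0; E - F, F] * !![1 / s₁, -(x₁ / s₁); 0, s₁] =
      ε • !![a, b; c, d] := by
  have hE : E = ε * (c * y₁ + d) * s₂ / s₁ := by field_simp [← hEs]; exact hEs
  have hF : F = ε * (c * x₁ + d) * s₂ / s₁ := by field_simp [← hFs]; exact hFs
  subst hE hF
  ext i j
  fin_cases i <;> fin_cases j <;>
    simp [Matrix.mul_apply, Fin.sum_univ_two] <;> field_simp <;> ring_nf
  · linear_combination ε * (c * y₁ + d) * hs₂sq - ε * a * hs₁sq - ε * hy' + ε * hx'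
  · linear_combination -ε * x₁ * (c * y₁ + d) * hs₂sq
      + ε * (x₁ * c * x₂ + d * x₂ - b) * hs₁sq + ε * (x₁ * hy' - y₁ * hx')
  · linear_combination -(ε * c) * hs₁sq
  · linear_combination ε * x₁ * c * hs₁sq

/-- Distortion decomposition: if g ∈ SL(2,ℝ) maps J₁ = [x₁,y₁] onto J₂ = [x₂,y₂]
preserving orientation, then g = ±T_{J₂} g_α T_{J₁}⁻¹ with α the distortion factor. -/
theorem distortion_decomposition (g : Matrix (Fin 2) (Fin 2) ℝ) (hdet : g.det = 1)
    (x₁ y₁ x₂ y₂ : ℝ) (h1 : x₁ < y₁) (h2 : x₂ < y₂)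
    (himg : moeb g '' Set.Icc x₁ y₁ = Set.Icc x₂ y₂)
    (hx : moeb g x₁ = x₂) (hy : moeb g y₁ = y₂) :
    ∃ R ∈ ({1, -1} : Set (Matrix (Fin 2) (Fin 2) ℝ)),
      g = R * (TJ x₂ y₂ *
        gAlpha (if g 1 0 ≠ 0 then
            Real.log ((-g 1 1 / g 1 0 - y₁) / (-g 1 1 / g 1 0 - x₁)) else 0) *
        (TJ x₁ y₁)⁻¹) := by
  set a := g 0 0 with ha
  set b := g 0 1 with hb
  set c := g 1 0 with hc
  set d := g 1 1 with hd
  rw [Matrix.det_fin_two] at hdet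
  rw [← ha, ← hb, ← hc, ← hd] at hdet
  -- bound on image
  have hbound : ∀ z ∈ Set.Icc x₁ y₁, |moeb g z| ≤ |x₂| + |y₂| := by
    intro z hz
    have : moeb g z ∈ Set.Icc x₂ y₂ := himg ▸ Set.mem_image_of_mem _ hz
    rw [abs_le]
    constructor
    · nlinarith [this.1, neg_abs_le x₂, abs_nonneg y₂]
    · nlinarith [this.2, le_abs_self y₂, abs_nonneg x₂]
  -- denominators nonzero
  have hu : c * x₁ + d ≠ 0 := by
    intro h0
    have hcne : c ≠ 0 := by
      intro hc0
      rw [hc0] at h0 hdet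
      simp at h0
      rw [h0] at hdet
      simp at hdet
    have hnum : c * (a * x₁ + b) = -1 := by
      have hd' : d = -(c * x₁) := by linarith
      rw [hd'] at hdet
      linear_combination -hdet
    apply pole_aux a c (|x₂| + |y₂|) (y₁ - x₁) hcne (by linarith) (by positivity)
      (fun t => moeb g (x₁ + t))
    · intro t ht0 htT
      exact hbound _ ⟨by linarith, by linarith⟩
    · intro t ht0 htT
      have hden : c * (x₁ + t) + d = c * t := by
        have hd' : d = -(c * x₁) := by linarith
        rw [hd']; ring
      show c * t * ((a * (x₁ + t) + b) / (c * (x₁ + t) + d)) = a * t - 1 / c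
      rw [hden]
      have hct : c * t ≠ 0 := mul_ne_zero hcne (ne_of_gt ht0)
      field_simp
      linear_combination hnum
  have hv : c * y₁ + d ≠ 0 := by
    intro h0
    have hcne : c ≠ 0 := by
      intro hc0
      rw [hc0] at h0 hdet
      simp at h0
      rw [h0] at hdet
      simp at hdet
    have hnum : c * (a * y₁ + b) = -1 := by
      have hd' : d = -(c * y₁) := by linarith
      rw [hd'] at hdet
      linear_combination -hdet
    apply pole_aux (-a) c (|x₂| + |y₂|) (y₁ - x₁) hcne (by linarith) (by positivity)
      (fun t => -(moeb g (y₁ - t)))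
    · intro t ht0 htT
      rw [abs_neg]
      exact hbound _ ⟨by linarith, by linarith⟩
    · intro t ht0 htT
      have hden : c * (y₁ - t) + d = -(c * t) := by
        have hd' : d = -(c * y₁) := by linarith
        rw [hd']; ring
      show c * t * (-((a * (y₁ - t) + b) / (c * (y₁ - t) + d))) = -a * t - 1 / c
      rw [hden]
      have hct : c * t ≠ 0 := mul_ne_zero hcne (ne_of_gt ht0)
      field_simp
      linear_combination hnum
  -- algebraic consequences
  have hx' : a * x₁ + b = x₂ * (c * x₁ + d) := (div_eq_iff hu).mp hx
  have hy' : a * y₁ + b = y₂ * (c * y₁ + d) := (div_eq_iff hv).mp hy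
  have huv : (c * x₁ + d) * (c * y₁ + d) * (y₂ - x₂) = y₁ - x₁ := by
    linear_combination (c * y₁ + d) * hx' - (c * x₁ + d) * hy' + (y₁ - x₁) * hdet
  have huvpos : 0 < (c * x₁ + d) * (c * y₁ + d) := by
    rcases lt_trichotomy ((c * x₁ + d) * (c * y₁ + d)) 0 with h | h | h
    · nlinarith [mul_neg_of_neg_of_pos h (by linarith : (0:ℝ) < y₂ - x₂)]
    · rw [h] at huv; simp at huv; linarith
    · exact h
  set ε : ℝ := if 0 < c * x₁ + d then 1 else -1 with hεdef
  have hεu : 0 < ε * (c * x₁ + d) := by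
    rw [hεdef]; split_ifs with h
    · simpa using h
    · have : c * x₁ + d < 0 := lt_of_le_of_ne (not_lt.mp h) hu
      nlinarith
  have hε2 : ε ^ 2 = 1 := by rw [hεdef]; split_ifs <;> norm_num
  have hεv : 0 < ε * (c * y₁ + d) := by
    have hmul : (ε * (c * x₁ + d)) * (ε * (c * y₁ + d))
        = (c * x₁ + d) * (c * y₁ + d) := by
      linear_combination ((c * x₁ + d) * (c * y₁ + d)) * hε2
    by_contra hcon
    push_neg at hcon
    nlinarith [mul_nonpos_of_nonneg_of_nonpos hεu.le hcon]
  -- sqrt facts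
  have hL1 : (0:ℝ) < y₁ - x₁ := by linarith
  have hL2 : (0:ℝ) < y₂ - x₂ := by linarith
  set s₁ := Real.sqrt (y₁ - x₁) with hs₁def
  set s₂ := Real.sqrt (y₂ - x₂) with hs₂def
  have hs₁pos : 0 < s₁ := Real.sqrt_pos.mpr hL1
  have hs₂pos : 0 < s₂ := Real.sqrt_pos.mpr hL2
  have hs₁sq : s₁ ^ 2 = y₁ - x₁ := Real.sq_sqrt hL1.le
  have hs₂sq : s₂ ^ 2 = y₂ - x₂ := Real.sq_sqrt hL2.le
  -- the value of α
  have hαeq : (if c ≠ 0 then Real.log ((-d / c - y₁) / (-d / c - x₁)) else 0)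
      = Real.log ((c * y₁ + d) / (c * x₁ + d)) := by
    split_ifs with hcz
    · congr 1
      rw [div_eq_div_iff]
      · field_simp
        ring
      · intro h0
        apply hu
        have : -d / c - x₁ = -(c * x₁ + d) / c := by field_simp; ring
        rw [this] at h0
        field_simp at h0
        linarith
      · exact hu
    · push_neg at hcz
      rw [hcz]
      have hdne : d ≠ 0 := by simpa [hcz] using hu
      simp [hdne, div_self hdne]
  -- exponential facts
  set L := Real.log ((c * y₁ + d) / (c * x₁ + d)) with hLdef
  have hrpos : 0 < (c * y₁ + d) / (c * x₁ + d) := by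
    have hεne : ε ≠ 0 := by intro h; rw [h] at hε2; norm_num at hε2
    have := div_pos hεv hεu
    rwa [mul_div_mul_left _ _ hεne] at this
  have hE2 : Real.exp (L / 2) ^ 2 = (c * y₁ + d) / (c * x₁ + d) := by
    rw [sq, ← Real.exp_add, show L / 2 + L / 2 = L by ring]
    exact Real.exp_log hrpos
  have hF2 : Real.exp (-L / 2) ^ 2 = (c * x₁ + d) / (c * y₁ + d) := by
    rw [sq, ← Real.exp_add, show -L / 2 + -L / 2 = -L by ring, Real.exp_neg,
      Real.exp_log hrpos, inv_div]
  have hEs : Real.exp (L / 2) * s₁ = ε * (c * y₁ + d) * s₂ := by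
    have hsq : (Real.exp (L / 2) * s₁) ^ 2 = (ε * (c * y₁ + d) * s₂) ^ 2 := by
      rw [mul_pow, mul_pow, mul_pow, hE2, hs₁sq, hs₂sq, div_mul_eq_mul_div,
        div_eq_iff hu]
      linear_combination (-(c * y₁ + d)) * huv
        - ((c * y₁ + d) ^ 2 * (y₂ - x₂) * (c * x₁ + d)) * hε2
    have hpos1 : 0 < Real.exp (L / 2) * s₁ := mul_pos (Real.exp_pos _) hs₁pos
    have hpos2 : 0 < ε * (c * y₁ + d) * s₂ := mul_pos hεv hs₂pos
    have hfac : (Real.exp (L / 2) * s₁ - ε * (c * y₁ + d) * s₂)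
        * (Real.exp (L / 2) * s₁ + ε * (c * y₁ + d) * s₂) = 0 := by
      linear_combination hsq
    rcases mul_eq_zero.mp hfac with h | h
    · linarith
    · exfalso; linarith
  have hFs : Real.exp (-L / 2) * s₁ = ε * (c * x₁ + d) * s₂ := by
    have hsq : (Real.exp (-L / 2) * s₁) ^ 2 = (ε * (c * x₁ + d) * s₂) ^ 2 := by
      rw [mul_pow, mul_pow, mul_pow, hF2, hs₁sq, hs₂sq, div_mul_eq_mul_div,
        div_eq_iff hv]
      linear_combination (-(c * x₁ + d)) * huv
        - ((c * x₁ + d) ^ 2 * (y₂ - x₂) * (c * y₁ + d)) * hε2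
    have hpos1 : 0 < Real.exp (-L / 2) * s₁ := mul_pos (Real.exp_pos _) hs₁pos
    have hpos2 : 0 < ε * (c * x₁ + d) * s₂ := mul_pos hεu hs₂pos
    have hfac : (Real.exp (-L / 2) * s₁ - ε * (c * x₁ + d) * s₂)
        * (Real.exp (-L / 2) * s₁ + ε * (c * x₁ + d) * s₂) = 0 := by
      linear_combination hsq
    rcases mul_eq_zero.mp hfac with h | h
    · linarith
    · exfalso; linarith
  -- inverse of TJ x₁ y₁
  have hTinv : (TJ x₁ y₁)⁻¹ = !![1 / s₁, -(x₁ / s₁); 0, s₁] := by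
    apply Matrix.inv_eq_right_inv
    rw [TJ, ← hs₁def]
    ext i j
    fin_cases i <;> fin_cases j <;>
      simp [Matrix.mul_apply, Fin.sum_univ_two] <;> field_simp <;> ring
  -- the key identity
  have key : TJ x₂ y₂ * gAlpha L * (TJ x₁ y₁)⁻¹ = ε • g := by
    rw [hTinv, TJ, gAlpha, ← hs₂def, Matrix.eta_fin_two g, ← ha, ← hb, ← hc, ← hd]
    exact entry_lemma a b c d x₁ y₁ x₂ y₂ s₁ s₂ _ _ ε hs₁pos.ne' hs₂pos.ne'
      hx' hy' hEs hFs hs₁sq hs₂sq hε2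
  refine ⟨ε • 1, ?_, ?_⟩
  · rw [hεdef]; split_ifs <;> simp
  · rw [hαeq, key, smul_mul_assoc, one_mul, smul_smul]
    rw [← pow_two, hε2, one_smul]
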